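/- Let k be a field and R a commutative graded k-algebra with grading 𝒜 : ℕ → Submodule k R, 𝒜 0 = k·1. If R is a Hilbert–Serre ring, then every strictly increasing chain 𝔭₀ ⊊ 𝔭₁ ⊊ ⋯ ⊊ 𝔭_r of homogeneous prime ideals of R has length r ≤ d(R); that is, the graded Krull dimension satisfies dim^gr(R) ≤ d(R). -/

import Mathlib

/-- The boundedness condition defining Hilbert–Serre rings: for all `t ∈ (0,1)` the
Poincaré series `∑ F n * tⁿ` converges and `(1 - t) ^ d` times its sum is bounded by a
uniform constant `C > 0`. -/
def HSBound (F : ℕ → ℕ) (d : ℕ) : Prop :=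
  ∃ C : ℝ, 0 < C ∧ ∀ t : ℝ, t ∈ Set.Ioo (0 : ℝ) 1 →
    Summable (fun n => (F n : ℝ) * t ^ n) ∧
      (1 - t) ^ d * (∑' n, (F n : ℝ) * t ^ n) ≤ C

/-- A graded algebra with grading `𝒜` is a *Hilbert–Serre ring* if every graded component
is finite dimensional over `k` and the Poincaré series `∑ dim_k (𝒜 n) tⁿ` satisfies the
boundedness condition `HSBound` for some `d`. -/
def IsHilbertSerre {k R : Type*} [Field k] [CommRing R] [Algebra k R]
    (𝒜 : ℕ → Submodule k R) : Prop :=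
  (∀ n, FiniteDimensional k (𝒜 n)) ∧
    ∃ d, HSBound (fun n => Module.finrank k (𝒜 n)) d

/-- The Hilbert–Serre dimension `d(R)`: the least `d` such that `(1-t)^d P_R(t)` is
bounded on `(0,1)`. -/
noncomputable def hsDim {k R : Type*} [Field k] [CommRing R] [Algebra k R]
    (𝒜 : ℕ → Submodule k R) : ℕ :=
  sInf {d | HSBound (fun n => Module.finrank k (𝒜 n)) d}



/-- Inner induction: polynomial in one variable `x` with coefficients evaluated via `ψ`. -/
lemma hs_poly_indep {A R : Type*} [CommRing A] [CommRing R]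
    (𝔭₀ 𝔭₁ : Ideal R) [h𝔭₀ : 𝔭₀.IsPrime] (h01 : 𝔭₀ ≤ 𝔭₁)
    (x : R) (hx1 : x ∈ 𝔭₁) (hx0 : x ∉ 𝔭₀)
    (ψ : A →+* R) (hψ : ∀ c : A, ψ c ∈ 𝔭₁ → c = 0) :
    ∀ q : Polynomial A, Polynomial.eval₂ ψ x q ∈ 𝔭₀ → q = 0 := by
  suffices H : ∀ n (q : Polynomial A), q.natDegree ≤ n → Polynomial.eval₂ ψ x q ∈ 𝔭₀ → q = 0 by
    exact fun q hq => H q.natDegree q le_rfl hq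
  intro n
  induction n with
  | zero =>
    intro q hdeg hq
    have hC : q = Polynomial.C (q.coeff 0) := Polynomial.eq_C_of_natDegree_le_zero hdeg
    rw [hC, Polynomial.eval₂_C] at hq
    rw [hC, hψ _ (h01 hq), map_zero]
  | succ n ih =>
    intro q hdeg hq
    have key := Polynomial.divX_mul_X_add q
    have hev : Polynomial.eval₂ ψ x q
        = Polynomial.eval₂ ψ x q.divX * x + ψ (q.coeff 0) := by
      conv_lhs => rw [← key]
      simp [Polynomial.eval₂_add, Polynomial.eval₂_mul]
    have hc0 : ψ (q.coeff 0) ∈ 𝔭₁ := by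
      have h1 : Polynomial.eval₂ ψ x q ∈ 𝔭₁ := h01 hq
      rw [hev] at h1
      have h2 : Polynomial.eval₂ ψ x q.divX * x ∈ 𝔭₁ := Ideal.mul_mem_left _ _ hx1
      have := Ideal.sub_mem _ h1 h2
      simpa using this
    have hc0' : q.coeff 0 = 0 := hψ _ hc0
    rw [hev, hc0', map_zero, add_zero] at hq
    have hdivX : Polynomial.eval₂ ψ x q.divX ∈ 𝔭₀ := by
      rcases h𝔭₀.mem_or_mem hq with h | h
      · exact h
      · exact absurd h hx0
    have hdeg' : q.divX.natDegree ≤ n := by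
      have := Polynomial.natDegree_divX_eq_natDegree_tsub_one (p := q)
      omega
    have : q.divX = 0 := ih q.divX hdeg' hdivX
    rw [← key, this, hc0', map_zero, zero_mul, add_zero]


open MvPolynomial in
lemma hs_mv_indep {k R : Type*} [Field k] [CommRing R] [Algebra k R] :
    ∀ (r : ℕ) (𝔭 : Fin (r + 1) → Ideal R), (∀ i, (𝔭 i).IsPrime) → StrictMono 𝔭 →
    ∀ (x : Fin r → R), (∀ i, x i ∈ 𝔭 i.succ) → (∀ i, x i ∉ 𝔭 i.castSucc) →
    ∀ p : MvPolynomial (Fin r) k, (MvPolynomial.aeval x) p ∈ 𝔭 0 → p = 0 := by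
  intro r
  induction r with
  | zero =>
    intro 𝔭 hprime hmono x hx1 hx0 p hp
    obtain ⟨c, rfl⟩ := MvPolynomial.C_surjective (Fin 0) p
    rw [aeval_C] at hp
    by_contra hc
    have hc0 : c ≠ 0 := by rintro rfl; simp at hc
    have : IsUnit (algebraMap k R c) := (isUnit_iff_ne_zero.2 hc0).map _
    exact (hprime 0).ne_top (Ideal.eq_top_of_isUnit_mem _ hp this)
  | succ r ih =>
    intro 𝔭 hprime hmono x hx1 hx0 p hp
    set ψ : MvPolynomial (Fin r) k →+* R :=
      (MvPolynomial.aeval (x ∘ Fin.succ) : MvPolynomial (Fin r) k →ₐ[k] R).toRingHom with hψdef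
    have hψ : ∀ c, ψ c ∈ 𝔭 1 → c = 0 := by
      intro c hc
      refine ih (fun i => 𝔭 i.succ) (fun i => hprime _)
        (fun i j hij => hmono (Fin.succ_lt_succ_iff.mpr hij))
        (x ∘ Fin.succ) (fun i => hx1 i.succ) (fun i => ?_) c ?_
      · have := hx0 i.succ
        rwa [← Fin.succ_castSucc] at this
      · exact hc
    have h01 : 𝔭 0 ≤ 𝔭 1 := (hmono (by simp [Fin.lt_def])).le
    have hx1' : x 0 ∈ 𝔭 1 := by simpa using hx1 0
    have hx0' : x 0 ∉ 𝔭 0 := by simpa using hx0 0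
    have heq : (Polynomial.eval₂RingHom ψ (x 0)).comp
        (MvPolynomial.finSuccEquiv k r : MvPolynomial (Fin (r + 1)) k →+* _)
        = ((MvPolynomial.aeval x : MvPolynomial (Fin (r + 1)) k →ₐ[k] R) :
            MvPolynomial (Fin (r + 1)) k →+* R) := by
      apply MvPolynomial.ringHom_ext
      · intro a
        simp [ψ, MvPolynomial.finSuccEquiv_apply, Algebra.algebraMap_eq_smul_one]
      · intro i
        refine Fin.cases ?_ (fun j => ?_) i
        · simp [ψ, MvPolynomial.finSuccEquiv_apply]
        · simp [ψ, MvPolynomial.finSuccEquiv_apply]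
    have hp' : Polynomial.eval₂ ψ (x 0) (MvPolynomial.finSuccEquiv k r p) ∈ 𝔭 0 := by
      have h2 := congrArg (fun f : MvPolynomial (Fin (r + 1)) k →+* R => f p) heq
      simp only [RingHom.comp_apply, RingHom.coe_coe] at h2
      rw [show Polynomial.eval₂ ψ (x 0) (MvPolynomial.finSuccEquiv k r p)
          = Polynomial.eval₂RingHom ψ (x 0) (MvPolynomial.finSuccEquiv k r p) from rfl, h2]
      exact hp
    have := hs_poly_indep (𝔭 0) (𝔭 1) (h𝔭₀ := hprime 0) h01 (x 0) hx1' hx0' ψ hψ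
      (MvPolynomial.finSuccEquiv k r p) hp'
    exact (map_eq_zero_iff _ (MvPolynomial.finSuccEquiv k r).injective).mp this


open MvPolynomial in
lemma hs_monomials_indep {k R : Type*} [Field k] [CommRing R] [Algebra k R]
    (r : ℕ) (𝔭 : Fin (r + 1) → Ideal R) (hprime : ∀ i, (𝔭 i).IsPrime) (hmono : StrictMono 𝔭)
    (x : Fin r → R) (hx1 : ∀ i, x i ∈ 𝔭 i.succ) (hx0 : ∀ i, x i ∉ 𝔭 i.castSucc) :
    LinearIndependent k (fun a : Fin r → ℕ => ∏ i, x i ^ a i) := by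
  have hker : LinearMap.ker (MvPolynomial.aeval x :
      MvPolynomial (Fin r) k →ₐ[k] R).toLinearMap = ⊥ := by
    rw [LinearMap.ker_eq_bot']
    intro p hp
    have hp' : (MvPolynomial.aeval x) p = 0 := hp
    refine hs_mv_indep r 𝔭 hprime hmono x hx1 hx0 p ?_
    rw [hp']
    exact zero_mem _
  have h1 := ((MvPolynomial.basisMonomials (Fin r) k).linearIndependent).map'
    (MvPolynomial.aeval x :
      MvPolynomial (Fin r) k →ₐ[k] R).toLinearMap hker
  have h2 := h1.comp (fun a : Fin r → ℕ => (Finsupp.equivFunOnFinite.symm a))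
    (Equiv.injective _)
  convert h2 using 1
  funext a
  simp only [Function.comp_apply, AlgHom.toLinearMap_apply, coe_basisMonomials]
  rw [MvPolynomial.aeval_monomial, map_one, one_mul, Finsupp.prod_pow]
  simp [Finsupp.equivFunOnFinite]
  all_goals rfl

/-- for a Hilbert–Serre ring `R`, every strictly increasing chain of
homogeneous prime ideals has length at most `d(R)`; i.e. `dim^gr(R) ≤ d(R)`. -/
theorem gradedKrullDim_le_hsDim {k R : Type*} [Field k] [CommRing R] [Algebra k R]
    (𝒜 : ℕ → Submodule k R) [GradedAlgebra 𝒜] (h0 : 𝒜 0 = 1)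
    (hHS : IsHilbertSerre 𝒜) :
    ∀ (r : ℕ) (𝔭 : Fin (r + 1) → Ideal R), StrictMono 𝔭 →
      (∀ i, (𝔭 i).IsPrime) → (∀ i, (𝔭 i).IsHomogeneous 𝒜) → r ≤ hsDim 𝒜 := by
  classical
  intro r 𝔭 hmono hprime hhom
  obtain ⟨hfin, hne⟩ := hHS
  refine le_csInf hne (fun d hd => ?_)
  by_contra hcon
  push_neg at hcon
  -- pick homogeneous elements x i ∈ 𝔭 i.succ \ 𝔭 i.castSucc
  have hex : ∀ i : Fin r, ∃ y : R, ∃ m : ℕ, y ∈ 𝒜 m ∧ y ∈ 𝔭 i.succ ∧ y ∉ 𝔭 i.castSucc := by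
    intro i
    obtain ⟨y, hy1, hy0⟩ := SetLike.exists_of_lt (hmono (Fin.castSucc_lt_succ (i := i)))
    by_contra hcc
    push_neg at hcc
    apply hy0
    have hsum := DirectSum.sum_support_decompose 𝒜 y
    have hmem : ∑ m ∈ (DirectSum.decompose 𝒜 y).support,
        ((DirectSum.decompose 𝒜 y m : 𝒜 m) : R) ∈ 𝔭 i.castSucc :=
      Ideal.sum_mem _ fun m _ => hcc _ m (SetLike.coe_mem _) (hhom i.succ m hy1)
    rwa [hsum] at hmem
  choose x n hxA hx1 hx0 using hex
  -- each degree is positive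
  have hn1 : ∀ i, 1 ≤ n i := by
    intro i
    by_contra hni
    have hni0 : n i = 0 := by omega
    have hx1mem : x i ∈ (1 : Submodule k R) := by
      rw [← h0, ← hni0]; exact hxA i
    rw [Submodule.one_eq_range] at hx1mem
    obtain ⟨c, hc⟩ := hx1mem
    by_cases hc0 : c = 0
    · apply hx0 i
      have : x i = 0 := by rw [← hc, hc0]; simp
      rw [this]; exact zero_mem _
    · have hu : IsUnit (x i) := by
        have : (algebraMap k R) c = x i := by simpa using hc
        rw [← this]
        exact (isUnit_iff_ne_zero.2 hc0).map (algebraMap k R)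
      exact (hprime i.succ).ne_top (Ideal.eq_top_of_isUnit_mem _ (hx1 i) hu)
  have hind := hs_monomials_indep (k := k) r 𝔭 hprime hmono x hx1 hx0
  set F : ℕ → ℕ := fun N => Module.finrank k (𝒜 N) with hF
  set s : ℕ := ∑ i, n i with hs
  have hr1 : 1 ≤ r := by omega
  have hs1 : 1 ≤ s := by
    calc 1 ≤ r := hr1
      _ = ∑ _i : Fin r, 1 := by simp
      _ ≤ s := Finset.sum_le_sum fun i _ => hn1 i
  -- cardinality of each fiber is at most the Hilbert function
  have hcard : ∀ (K N : ℕ),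
      ((Finset.univ : Finset (Fin r → Fin (K + 1))).filter
        (fun a => ∑ i, (a i : ℕ) * n i = N)).card ≤ F N := by
    intro K N
    haveI := hfin N
    set T := (Finset.univ : Finset (Fin r → Fin (K + 1))).filter
      (fun a => ∑ i, (a i : ℕ) * n i = N) with hT
    have hmem : ∀ a ∈ T, (∏ i, x i ^ (a i : ℕ)) ∈ 𝒜 N := by
      intro a ha
      have hdeg : ∑ i, (a i : ℕ) • n i = N := by
        simpa [smul_eq_mul] using (Finset.mem_filter.mp ha).2
      have := SetLike.prod_pow_mem_graded 𝒜 n x (fun j => (a j : ℕ))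
        (fun j _ => hxA j) (F := Finset.univ)
      rwa [hdeg] at this
    have hvind : LinearIndependent k
        (fun a : {a // a ∈ T} => (⟨∏ i, x i ^ (a.1 i : ℕ), hmem a.1 a.2⟩ : 𝒜 N)) := by
      apply LinearIndependent.of_comp (𝒜 N).subtype
      have hg : Function.Injective (fun (a : {a // a ∈ T}) (i : Fin r) => (a.1 i : ℕ)) := by
        intro a b hab
        apply Subtype.ext; funext i
        exact Fin.val_injective (congrFun hab i)
      exact hind.comp _ hg
    calc T.card = Fintype.card {a // a ∈ T} := (Fintype.card_coe T).symm
      _ ≤ F N := hvind.fintype_card_le_finrank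
  -- global count
  have hcount : ∀ K : ℕ, (K + 1) ^ r ≤ ∑ N ∈ Finset.range (s * K + 1), F N := by
    intro K
    have hmap : ∀ a : Fin r → Fin (K + 1),
        (∑ i, (a i : ℕ) * n i) ∈ Finset.range (s * K + 1) := by
      intro a
      simp only [Finset.mem_range]
      have h1 : ∑ i, (a i : ℕ) * n i ≤ ∑ i, n i * K := by
        refine Finset.sum_le_sum fun i _ => ?_
        have hik : (a i : ℕ) ≤ K := by omega
        calc (a i : ℕ) * n i ≤ K * n i := Nat.mul_le_mul_right _ hik
          _ = n i * K := mul_comm _ _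
      have h2 : ∑ i, n i * K = s * K := by rw [hs, Finset.sum_mul]
      omega
    calc (K + 1) ^ r = (Finset.univ : Finset (Fin r → Fin (K + 1))).card := by
          simp [Finset.card_univ]
      _ = ∑ N ∈ Finset.range (s * K + 1),
          ((Finset.univ : Finset (Fin r → Fin (K + 1))).filter
            (fun a => ∑ i, (a i : ℕ) * n i = N)).card :=
          Finset.card_eq_sum_card_fiberwise fun a _ => hmap a
      _ ≤ ∑ N ∈ Finset.range (s * K + 1), F N := Finset.sum_le_sum fun N _ => hcard K N
  -- analytic contradiction
  obtain ⟨C, hC, hbound⟩ := hd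
  set B : ℝ := (2 * s : ℝ) ^ d with hB
  have hBpos : 0 < B := by positivity
  set K : ℕ := ⌈2 * C * B⌉₊ with hK
  set M : ℕ := s * K with hM
  set u : ℝ := 2 * ((M : ℝ) + 1) with hu
  have hupos : 0 < u := by positivity
  set ε : ℝ := u⁻¹ with hε
  have hεpos : 0 < ε := by positivity
  have hεle : ε ≤ 1 / 2 := by
    rw [hε, hu]
    rw [inv_le_comm₀ (by positivity) (by norm_num)]
    push_cast
    linarith [Nat.cast_nonneg (α := ℝ) M]
  set t : ℝ := 1 - ε with ht
  have htIoo : t ∈ Set.Ioo (0 : ℝ) 1 := ⟨by rw [ht]; linarith, by rw [ht]; linarith⟩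
  obtain ⟨hsummable, hle⟩ := hbound t htIoo
  have ht0 : (0 : ℝ) ≤ t := htIoo.1.le
  have ht1 : t ≤ 1 := htIoo.2.le
  -- lower bound for the partial sum
  have hpartial : ∑ N ∈ Finset.range (M + 1), (F N : ℝ) * t ^ N
      ≤ ∑' N, (F N : ℝ) * t ^ N :=
    Summable.sum_le_tsum _ (fun N _ => by positivity) hsummable
  have hlow : t ^ M * ((K : ℝ) + 1) ^ r
      ≤ ∑ N ∈ Finset.range (M + 1), (F N : ℝ) * t ^ N := by
    have hcast : ((K : ℝ) + 1) ^ r ≤ ((∑ N ∈ Finset.range (M + 1), F N : ℕ) : ℝ) := by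
      have := hcount K
      rw [← hM] at this
      exact_mod_cast this
    calc t ^ M * ((K : ℝ) + 1) ^ r
        ≤ t ^ M * ((∑ N ∈ Finset.range (M + 1), F N : ℕ) : ℝ) :=
          mul_le_mul_of_nonneg_left hcast (by positivity)
      _ = ∑ N ∈ Finset.range (M + 1), (F N : ℝ) * t ^ M := by
          push_cast; rw [Finset.mul_sum]; exact Finset.sum_congr rfl fun N _ => by ring
      _ ≤ ∑ N ∈ Finset.range (M + 1), (F N : ℝ) * t ^ N :=
          Finset.sum_le_sum fun N hN => mul_le_mul_of_nonneg_left
            (pow_le_pow_of_le_one ht0 ht1 (Finset.mem_range_succ_iff.mp hN)) (by positivity)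
  -- t ^ M ≥ 1/2
  have htM : (1 : ℝ) / 2 ≤ t ^ M := by
    have hber := one_add_mul_le_pow (a := -ε) (by linarith) M
    have heq : (1 + -ε) ^ M = t ^ M := by rw [ht]; ring_nf
    rw [heq] at hber
    have hMε : (M : ℝ) * ε ≤ 1 / 2 := by
      rw [hε, hu, ← div_eq_mul_inv, div_le_iff₀ (by positivity)]
      push_cast
      linarith [Nat.cast_nonneg (α := ℝ) M]
    linarith
  -- assemble
  have hS : (1 / 2 : ℝ) * ((K : ℝ) + 1) ^ (d + 1) ≤ ∑' N, (F N : ℝ) * t ^ N := by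
    have h1 : ((K : ℝ) + 1) ^ (d + 1) ≤ ((K : ℝ) + 1) ^ r :=
      pow_le_pow_right₀ (by linarith [Nat.cast_nonneg (α := ℝ) K]) (by omega)
    have h2 : (1 / 2 : ℝ) * ((K : ℝ) + 1) ^ (d + 1) ≤ t ^ M * ((K : ℝ) + 1) ^ r :=
      mul_le_mul htM h1 (by positivity) (by positivity)
    linarith [hlow, hpartial]
  have h1t : 1 - t = ε := by rw [ht]; ring
  have hud : u ^ d ≤ B * ((K : ℝ) + 1) ^ d := by
    have huK : u ≤ 2 * (s : ℝ) * ((K : ℝ) + 1) := by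
      rw [hu, hM]
      push_cast
      have : (1 : ℝ) ≤ (s : ℝ) := by exact_mod_cast hs1
      nlinarith [Nat.cast_nonneg (α := ℝ) K]
    calc u ^ d ≤ (2 * (s : ℝ) * ((K : ℝ) + 1)) ^ d := pow_le_pow_left₀ hupos.le huK d
      _ = B * ((K : ℝ) + 1) ^ d := by rw [hB, mul_pow]
  have hεd : (1 - t) ^ d * (∑' N, (F N : ℝ) * t ^ N) = (u ^ d)⁻¹ * (∑' N, (F N : ℝ) * t ^ N) := by
    rw [h1t, hε, inv_pow]
  rw [hεd] at hle
  have hSle : ∑' N, (F N : ℝ) * t ^ N ≤ u ^ d * C := by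
    rwa [inv_mul_le_iff₀ (by positivity)] at hle
  have hfinal : ((K : ℝ) + 1) ^ (d + 1) ≤ 2 * C * B * ((K : ℝ) + 1) ^ d := by
    have h3 : u ^ d * C ≤ B * ((K : ℝ) + 1) ^ d * C :=
      mul_le_mul_of_nonneg_right hud hC.le
    nlinarith [hS, hSle]
  have hKle : (K : ℝ) + 1 ≤ 2 * C * B := by
    have hpow : (0 : ℝ) < ((K : ℝ) + 1) ^ d := by positivity
    rw [pow_succ, mul_comm (((K : ℝ) + 1) ^ d) ((K : ℝ) + 1)] at hfinal
    exact le_of_mul_le_mul_right hfinal hpow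
  have hceil : 2 * C * B ≤ (K : ℝ) := Nat.le_ceil _
  linarith
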